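/- The function d(X,Y) defined on subsets of R^N with at most one element by d({x},{y}) = min(c, d_b(x,y)), d(∅,∅) = 0, and d(X,Y) = c/2^(1/p) otherwise, is a metric on the collection of subsets of R^N of cardinality at most one, where d_b is a metric on R^N, c > 0 and 1 ≤ p < ∞. -/

import Mathlib

/-- Subsets of ℝ^N with at most one element, modelled as `Option (Fin N → ℝ)`
(`none` for the empty set, `some x` for the singleton `{x}`). -/
noncomputable def dOpt {N : ℕ} (db : (Fin N → ℝ) → (Fin N → ℝ) → ℝ) (c p : ℝ) :
    Option (Fin N → ℝ) → Option (Fin N → ℝ) → ℝ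
  | some x, some y => min c (db x y)
  | none, none => 0
  | _, _ => c / (2 : ℝ) ^ (1 / p)

/-- The base distance `d` of Definition 1 is a metric on the collection of
subsets of ℝ^N with at most one element. -/
theorem base_distance_is_metric {N : ℕ} (db : (Fin N → ℝ) → (Fin N → ℝ) → ℝ)
    (c p : ℝ) (hc : 0 < c) (hp : 1 ≤ p)
    (hdb_nonneg : ∀ x y, 0 ≤ db x y)
    (hdb_eq : ∀ x y, db x y = 0 ↔ x = y)
    (hdb_symm : ∀ x y, db x y = db y x)
    (hdb_tri : ∀ x y z, db x z ≤ db x y + db y z) :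
    (∀ X Y : Option (Fin N → ℝ), 0 ≤ dOpt db c p X Y) ∧
    (∀ X Y : Option (Fin N → ℝ), dOpt db c p X Y = 0 ↔ X = Y) ∧
    (∀ X Y : Option (Fin N → ℝ), dOpt db c p X Y = dOpt db c p Y X) ∧
    (∀ X Y Z : Option (Fin N → ℝ),
      dOpt db c p X Z ≤ dOpt db c p X Y + dOpt db c p Y Z) := by
  have hq : (0:ℝ) < (2:ℝ) ^ (1 / p) := by positivity
  have hq2 : (2:ℝ) ^ (1 / p) ≤ 2 := by
    calc (2:ℝ) ^ (1/p) ≤ (2:ℝ) ^ (1:ℝ) :=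
          Real.rpow_le_rpow_of_exponent_le (by norm_num)
            (by rw [div_le_one (lt_of_lt_of_le one_pos hp)]; exact hp)
      _ = 2 := Real.rpow_one 2
  have hcq : 0 < c / (2:ℝ) ^ (1/p) := div_pos hc hq
  have hc2 : c ≤ c / (2:ℝ) ^ (1/p) + c / (2:ℝ) ^ (1/p) := by
    have : c / 2 ≤ c / (2:ℝ) ^ (1/p) := div_le_div_of_nonneg_left hc.le hq hq2
    linarith
  refine ⟨?_, ?_, ?_, ?_⟩
  · rintro (_|x) (_|y)
    · exact le_refl 0
    · exact hcq.le
    · exact hcq.le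
    · exact le_min hc.le (hdb_nonneg x y)
  · rintro (_|x) (_|y)
    · simp [dOpt]
    · simp only [dOpt]
      exact ⟨fun h => absurd h hcq.ne', fun h => by cases h⟩
    · simp only [dOpt]
      exact ⟨fun h => absurd h hcq.ne', fun h => by cases h⟩
    · simp only [dOpt, Option.some.injEq]
      constructor
      · intro h
        rcases min_eq_iff.1 h with ⟨hcz, _⟩ | ⟨hdz, _⟩
        · exact absurd hcz hc.ne'
        · exact (hdb_eq x y).1 hdz
      · rintro rfl
        rw [(hdb_eq x x).2 rfl, min_eq_right hc.le]
  · rintro (_|x) (_|y)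
    · rfl
    · rfl
    · rfl
    · simp only [dOpt]; rw [hdb_symm x y]
  · rintro (_|x) (_|y) (_|z) <;> simp only [dOpt]
    · linarith
    · linarith
    · linarith [hcq.le]
    · exact le_add_of_nonneg_right (le_min hc.le (hdb_nonneg y z))
    · linarith
    · exact le_trans (min_le_left _ _) hc2
    · exact le_add_of_nonneg_left (le_min hc.le (hdb_nonneg x y))
    · rcases le_total c (db x y) with h | h
      · exact le_trans (min_le_left _ _)
          (le_add_of_le_of_nonneg (by simp [min_eq_left h])
            (le_min hc.le (hdb_nonneg y z)))
      · rcases le_total c (db y z) with h2 | h2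
        · exact le_trans (min_le_left _ _)
            (le_add_of_nonneg_of_le (le_min hc.le (hdb_nonneg x y))
              (by simp [min_eq_left h2]))
        · simp only [min_eq_right h, min_eq_right h2]
          exact le_trans (min_le_right _ _) (hdb_tri x y z)
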